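/- Let G = G_Γ be an Artin group for which the Σ¹-conjecture holds, i.e., for every character χ of G one has [χ] ∈ Σ¹(G) if and only if L(χ) is a connected dominant subgraph of Γ. Then there exist finitely many subgroups H₁, …, H_s of G such that for every character χ of G: [χ] ∉ Σ¹(G) if and only if χ(H_i) = 0 for some i (in particular, the complement of Σ¹(G) is a rationally defined spherical polyhedron). -/

import Mathlib

/-- A (real) character of a group: a nonzero homomorphism to `(ℝ, +)`. -/
def IsCharacter {G : Type*} [Group G] (χ : G → ℝ) : Prop :=
  (∀ g h : G, χ (g * h) = χ g + χ h) ∧ χ ≠ 0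

/-- `χ` is `S`-connected: any two elements of `G_χ = {g | 0 ≤ χ g}` are joined by a
sequence inside `G_χ` whose consecutive members differ by right multiplication by an
element of `S ∪ S⁻¹`. -/
def SConnectedChar {G : Type*} [Group G] (χ : G → ℝ) (S : Set G) : Prop :=
  ∀ a b : G, 0 ≤ χ a → 0 ≤ χ b →
    Relation.ReflTransGen
      (fun x y : G => 0 ≤ χ x ∧ 0 ≤ χ y ∧ ∃ s, (s ∈ S ∨ s⁻¹ ∈ S) ∧ y = x * s) a b

/-- `[χ] ∈ Σ¹(G)`: `χ` is `S`-connected for every finite generating set `S` of `G`. -/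
def MemSigma1 {G : Type*} [Group G] (χ : G → ℝ) : Prop :=
  ∀ S : Finset G, Subgroup.closure (S : Set G) = ⊤ → SConnectedChar χ (S : Set G)

/-- The alternating word `uvu⋯` of length `n` in the free group. -/
def altWord {V : Type*} (u v : V) : ℕ → FreeGroup V
  | 0 => 1
  | n + 1 => FreeGroup.of u * altWord v u n

/-- The Artin relations of a labeled graph. -/
def artinRels {V : Type*} (Γ : SimpleGraph V) (label : V → V → ℕ) : Set (FreeGroup V) :=
  {r | ∃ u v : V, Γ.Adj u v ∧ r = altWord u v (label u v) * (altWord v u (label u v))⁻¹}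

/-- The Artin group of a labeled graph. -/
abbrev ArtinGroup {V : Type*} (Γ : SimpleGraph V) (label : V → V → ℕ) : Type _ :=
  PresentedGroup (artinRels Γ label)

/-- The full subgraph `L_F` of `Γ` induced on vertices where `c` is nonzero. -/
def fullSupportSubgraph {V : Type*} (Γ : SimpleGraph V) (c : V → ℝ) : Γ.Subgraph where
  verts := {v | c v ≠ 0}
  Adj u v := Γ.Adj u v ∧ c u ≠ 0 ∧ c v ≠ 0
  adj_sub h := h.1
  edge_vert h := h.2.1
  symm := ⟨fun u v h => ⟨h.1.symm, h.2.2, h.2.1⟩⟩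

/-- The living subgraph `L(χ)`: the full subgraph on vertices with nonzero value,
with all dead edges (even label `> 2` and opposite values) removed. -/
def livingSubgraph {V : Type*} (Γ : SimpleGraph V) (label : V → V → ℕ) (c : V → ℝ)
    (hsym : ∀ u v, label u v = label v u) : Γ.Subgraph where
  verts := {v | c v ≠ 0}
  Adj u v := Γ.Adj u v ∧ c u ≠ 0 ∧ c v ≠ 0 ∧
    ¬ (Even (label u v) ∧ 2 < label u v ∧ c u = - c v)
  adj_sub h := h.1
  edge_vert h := h.2.1
  symm := by
    constructor
    rintro u v ⟨h1, h2, h3, h4⟩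
    refine ⟨h1.symm, h3, h2, ?_⟩
    rw [hsym v u]
    rintro ⟨he, hl, hc⟩
    exact h4 ⟨he, hl, by linarith⟩

/-- A subgraph is dominant if every vertex outside of it is adjacent in `Γ`
to a vertex of the subgraph. -/
def IsDominant {V : Type*} (Γ : SimpleGraph V) (H : Γ.Subgraph) : Prop :=
  ∀ v : V, v ∉ H.verts → ∃ u ∈ H.verts, Γ.Adj v u

/-- Condition (O): every closed reduced walk all of whose edges have labels `> 2`
has odd length. -/
def ConditionO {V : Type*} (Γ : SimpleGraph V) (label : V → V → ℕ) : Prop :=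
  ∀ (v : V) (w : Γ.Walk v v), 0 < w.length →
    List.Chain' (fun d d' : Γ.Dart => d' ≠ d.symm) w.darts →
    (∀ d ∈ w.darts, 2 < label d.toProd.1 d.toProd.2) →
    Odd w.length

/-- The "kernel" of an additive character, as a subgroup. -/
def charKer {G : Type*} [Group G] (χ : G → ℝ)
    (hadd : ∀ g h : G, χ (g * h) = χ g + χ h) : Subgroup G where
  carrier := {g | χ g = 0}
  one_mem' := by
    have h := hadd 1 1
    rw [one_mul] at h
    simp only [Set.mem_setOf_eq]
    linarith
  mul_mem' := by
    intro a b ha hb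
    simp only [Set.mem_setOf_eq] at *
    rw [hadd, ha, hb, add_zero]
  inv_mem' := by
    intro g hg
    simp only [Set.mem_setOf_eq] at *
    have h := hadd g g⁻¹
    rw [mul_inv_cancel] at h
    have h1 := hadd 1 1
    rw [one_mul] at h1
    have : χ (1 : G) = 0 := by linarith
    rw [this] at h
    linarith

/-- Index type for the configurations witnessing failure of `Σ¹`-membership. -/
def CfgIndex (V : Type) (Γ : SimpleGraph V) (label : V → V → ℕ) : Type :=
  V ⊕ {p : Set V × Set V // p.1.Nonempty ∧ p.2.Nonempty ∧ Disjoint p.1 p.2 ∧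
    ∀ u ∈ p.1, ∀ v ∈ p.2, Γ.Adj u v → Even (label u v) ∧ 2 < label u v}

noncomputable instance {V : Type} [Fintype V] (Γ : SimpleGraph V) (label : V → V → ℕ) :
    Fintype (CfgIndex V Γ label) := by
  classical
  unfold CfgIndex
  infer_instance

/-- The subgroup attached to each configuration. -/
def cfgSubgroup {V : Type} (Γ : SimpleGraph V) (label : V → V → ℕ) :
    CfgIndex V Γ label → Subgroup (ArtinGroup Γ label)
  | .inl v => Subgroup.closure
      ({(PresentedGroup.of v : ArtinGroup Γ label)} ∪
        ((fun u => (PresentedGroup.of u : ArtinGroup Γ label)) '' {u | Γ.Adj v u}))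
  | .inr p => Subgroup.closure
      (((fun u => (PresentedGroup.of u : ArtinGroup Γ label)) '' (p.1.1 ∪ p.1.2)ᶜ) ∪
        {g | ∃ u ∈ p.1.1, ∃ w ∈ p.1.2, Γ.Adj u w ∧
          g = (PresentedGroup.of u : ArtinGroup Γ label) * PresentedGroup.of w})

theorem cfg_main {V : Type} [Fintype V] (Γ : SimpleGraph V) (label : V → V → ℕ)
    (hsym : ∀ u v, label u v = label v u)
    (χ : ArtinGroup Γ label → ℝ) (hχ : IsCharacter χ) :
    (¬ ((livingSubgraph Γ label (fun v => χ (PresentedGroup.of v)) hsym).Connected ∧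
          IsDominant Γ (livingSubgraph Γ label (fun v => χ (PresentedGroup.of v)) hsym)) ↔
      ∃ i : CfgIndex V Γ label, ∀ h ∈ cfgSubgroup Γ label i, χ h = 0) := by
  classical
  obtain ⟨hadd, hne⟩ := hχ
  set c : V → ℝ := fun v => χ (PresentedGroup.of v) with hc
  set L := livingSubgraph Γ label c hsym with hLdef
  have hverts : L.verts = {v | c v ≠ 0} := rfl
  have hAdj : ∀ u v, L.Adj u v ↔ (Γ.Adj u v ∧ c u ≠ 0 ∧ c v ≠ 0 ∧
      ¬ (Even (label u v) ∧ 2 < label u v ∧ c u = - c v)) := fun _ _ => Iff.rfl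
  -- some vertex has nonzero value
  have hsupp : ∃ v, c v ≠ 0 := by
    by_contra hz
    push_neg at hz
    have hle : (⊤ : Subgroup (ArtinGroup Γ label)) ≤ charKer χ hadd := by
      rw [← PresentedGroup.closure_range_of (artinRels Γ label)]
      refine (Subgroup.closure_le _).2 ?_
      rintro _ ⟨v, rfl⟩
      exact hz v
    exact hne (funext fun g => hle (Subgroup.mem_top g))
  constructor
  · -- forward direction
    intro hnCD
    rw [not_and_or] at hnCD
    rcases hnCD with hnC | hnD
    · -- not connected: build a partition witness
      rw [SimpleGraph.Subgraph.connected_iff, not_and_or] at hnC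
      have hvne : L.verts.Nonempty := by
        obtain ⟨v, hv⟩ := hsupp; exact ⟨v, hv⟩
      rcases hnC with hnP | hvempty
      · rw [SimpleGraph.Subgraph.preconnected_iff] at hnP
        unfold SimpleGraph.Preconnected at hnP
        push_neg at hnP
        obtain ⟨x, y, hxy⟩ := hnP
        set A : Set V := {a | ∃ ha : a ∈ L.verts, L.coe.Reachable x ⟨a, ha⟩} with hAdef
        set B : Set V := {b | b ∈ L.verts ∧ b ∉ A} with hBdef
        have hxA : (x : V) ∈ A := ⟨x.2, by rw [Subtype.coe_eta]⟩
        have hyB : (y : V) ∈ B := by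
          refine ⟨y.2, ?_⟩
          rintro ⟨hy, hr⟩
          exact hxy (by rwa [Subtype.coe_eta] at hr)
        have hdisj : Disjoint A B := by
          rw [Set.disjoint_left]
          rintro a haA ⟨_, hnA⟩
          exact hnA haA
        have key : ∀ u ∈ A, ∀ v ∈ B, Γ.Adj u v →
            (Even (label u v) ∧ 2 < label u v ∧ c u = - c v) := by
          rintro u ⟨hu, hru⟩ v ⟨hv, hvnA⟩ hadj
          by_contra hnd
          have hLadj : L.Adj u v := (hAdj u v).2 ⟨hadj, hu, hv, hnd⟩
          have hcadj : L.coe.Adj ⟨u, hu⟩ ⟨v, hv⟩ := hLadj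
          exact hvnA ⟨hv, hru.trans hcadj.reachable⟩
        refine ⟨.inr ⟨(A, B), ⟨x, hxA⟩, ⟨y, hyB⟩, hdisj,
          fun u hu v hv hadj => ⟨(key u hu v hv hadj).1, (key u hu v hv hadj).2.1⟩⟩, ?_⟩
        intro h hh
        refine (Subgroup.closure_le (charKer χ hadd)).2 ?_ hh
        rintro g (⟨w, hw, rfl⟩ | ⟨u, hu, w, hw, hadj, rfl⟩)
        · -- w outside A ∪ B has value 0
          show c w = 0
          by_contra hcw
          rcases (show w ∈ A ∨ w ∈ B by
            by_cases hwa : w ∈ A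
            · exact Or.inl hwa
            · exact Or.inr ⟨hcw, hwa⟩) with hm | hm
          · exact hw (Or.inl hm)
          · exact hw (Or.inr hm)
        · show χ _ = 0
          rw [hadd]
          have := (key u hu w hw hadj).2.2
          show c u + c w = 0
          linarith
      · exact absurd hvempty (by simpa using hvne)
    · -- not dominant
      unfold IsDominant at hnD
      push_neg at hnD
      obtain ⟨v, hv0, hvn⟩ := hnD
      have hcv : c v = 0 := by
        by_contra h; exact hv0 h
      refine ⟨.inl v, ?_⟩
      intro h hh
      refine (Subgroup.closure_le (charKer χ hadd)).2 ?_ hh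
      rintro g (rfl | ⟨u, hu, rfl⟩)
      · exact hcv
      · show c u = 0
        by_contra hcu
        exact (hvn u hcu) (by assumption)
  · -- backward direction
    rintro ⟨i, hvan⟩ ⟨hconn, hdom⟩
    match i with
    | .inl v =>
      have hcv : c v = 0 :=
        hvan _ (Subgroup.subset_closure (Or.inl rfl))
      have hvnv : v ∉ L.verts := fun h => h hcv
      obtain ⟨u, hu, hadj⟩ := hdom v hvnv
      have hcu : c u = 0 :=
        hvan _ (Subgroup.subset_closure (Or.inr ⟨u, hadj, rfl⟩))
      exact hu hcu
    | .inr ⟨⟨A, B⟩, hA, hB, hdisj, hlab⟩ =>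
      have hZ : ∀ w, w ∉ A ∪ B → c w = 0 := fun w hw =>
        hvan _ (Subgroup.subset_closure (Or.inl ⟨w, hw, rfl⟩))
      have hcross : ∀ u ∈ A, ∀ w ∈ B, Γ.Adj u w → c u + c w = 0 := by
        intro u hu w hw hadj
        have := hvan _ (Subgroup.subset_closure
          (Or.inr ⟨u, hu, w, hw, hadj, rfl⟩))
        rw [hadd] at this
        exact this
      by_cases hAs : ∃ a ∈ A, c a ≠ 0
      · by_cases hBs : ∃ b ∈ B, c b ≠ 0
        · -- both sides meet the support: contradiction with connectedness
          obtain ⟨a, haA, hca⟩ := hAs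
          obtain ⟨b, hbB, hcb⟩ := hBs
          have step : ∀ p q : L.verts, L.coe.Adj p q → (p : V) ∈ A → (q : V) ∈ A := by
            rintro ⟨u, hu⟩ ⟨w, hw⟩ hpq huA
            have hLadj : L.Adj u w := hpq
            obtain ⟨hadj, hcu, hcw, hnd⟩ := (hAdj u w).1 hLadj
            by_contra hwA
            have hwAB : w ∈ A ∪ B := by
              by_contra hwo
              exact hcw (hZ w hwo)
            have hwB : w ∈ B := by
              rcases hwAB with h | h
              · exact absurd h hwA
              · exact h
            have h1 := hlab u huA w hwB hadj
            have h2 := hcross u huA w hwB hadj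
            exact hnd ⟨h1.1, h1.2, by linarith⟩
          have main : ∀ (p q : L.verts), L.coe.Walk p q → (p : V) ∈ A → (q : V) ∈ A := by
            intro p q w
            induction w with
            | nil => exact id
            | cons h _ ih => intro hp; exact ih (step _ _ h hp)
          have hreach : L.coe.Reachable ⟨a, hca⟩ ⟨b, hcb⟩ :=
            hconn.coe.preconnected ⟨a, hca⟩ ⟨b, hcb⟩
          have hbA : b ∈ A := hreach.elim fun w => main _ _ w haA
          exact (Set.disjoint_left.mp hdisj hbA) hbB
        · -- B entirely has value 0 (second symmetric case)
          push_neg at hBs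
          obtain ⟨b, hbB⟩ := hB
          have hcb : c b = 0 := hBs b hbB
          obtain ⟨u, hu, hadj⟩ := hdom b (fun h => h hcb)
          have hcu : c u ≠ 0 := hu
          have huAB : u ∈ A ∪ B := by
            by_contra huo
            exact hcu (hZ u huo)
          rcases huAB with h | h
          · have := hcross u h b hbB hadj.symm
            rw [hcb] at this
            exact hcu (by linarith)
          · exact hcu (hBs u h)
      · -- A entirely has value 0: domination fails at a point of A
        push_neg at hAs
        obtain ⟨a, haA⟩ := hA
        have hca : c a = 0 := hAs a haA
        obtain ⟨u, hu, hadj⟩ := hdom a (fun h => h hca)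
        have hcu : c u ≠ 0 := hu
        have huAB : u ∈ A ∪ B := by
          by_contra huo
          exact hcu (hZ u huo)
        rcases huAB with h | h
        · exact hcu (hAs u h)
        · have := hcross a haA u h hadj
          rw [hca] at this
          exact hcu (by linarith)

/-- **Proposition B.** If the `Σ¹`-conjecture holds for the Artin group
`G = G_Γ`, then there are finitely many subgroups `H₁, …, H_s` of `G` such that a
character class lies outside `Σ¹(G)` exactly when the character vanishes on some `Hᵢ`;
in particular `Σ¹(G)ᶜ` is a rationally defined spherical polyhedron. -/
theorem statement2 {V : Type} [Fintype V] (Γ : SimpleGraph V) (label : V → V → ℕ)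
    (hsym : ∀ u v, label u v = label v u)
    (hge : ∀ u v, Γ.Adj u v → 2 ≤ label u v)
    (hconj : ∀ χ : ArtinGroup Γ label → ℝ, IsCharacter χ →
      (MemSigma1 χ ↔
        ((livingSubgraph Γ label (fun v => χ (PresentedGroup.of v)) hsym).Connected ∧
          IsDominant Γ (livingSubgraph Γ label (fun v => χ (PresentedGroup.of v)) hsym)))) :
    ∃ (s : ℕ) (H : Fin s → Subgroup (ArtinGroup Γ label)),
      ∀ χ : ArtinGroup Γ label → ℝ, IsCharacter χ →
        (¬ MemSigma1 χ ↔ ∃ i : Fin s, ∀ h ∈ H i, χ h = 0) := by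
  classical
  refine ⟨Fintype.card (CfgIndex V Γ label),
    fun n => cfgSubgroup Γ label ((Fintype.equivFin (CfgIndex V Γ label)).symm n), ?_⟩
  intro χ hχ
  rw [hconj χ hχ]
  rw [cfg_main Γ label hsym χ hχ]
  constructor
  · rintro ⟨i, hi⟩
    exact ⟨Fintype.equivFin (CfgIndex V Γ label) i, by simpa using hi⟩
  · rintro ⟨n, hn⟩
    exact ⟨(Fintype.equivFin (CfgIndex V Γ label)).symm n, hn⟩
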